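/- arXiv:0707.4160 — 7 statements merged into one kernel-verified Lean document; each statement's English description precedes it below -/
import Mathlib

section
/- Let $V$ be a vertex algebra and $a \in V$ a strongly nilpotent element of degree two (every product of elements of $V$ under arbitrary $j$-products and parenthesizations containing $a$ at least twice vanishes). Then the ideal of $V$ generated by $a$ is abelian, i.e., all $j$-products of two of its elements vanish. -/
open scoped BigOperators

/-- A vertex algebra structure on a complex vector space `V`.
`P n a b` denotes the `n`-th product `a_{(n)} b`, `vac` is the vacuum `𝟙`,
and `D` is the infinitesimal translation operator `T`. -/
structure VertexAlgebra (V : Type*) [AddCommGroup V] [Module ℂ V] where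
  P : ℤ → V →ₗ[ℂ] V →ₗ[ℂ] V
  vac : V
  D : V →ₗ[ℂ] V
  field_ax : ∀ a b : V, ∃ N : ℕ, ∀ n : ℕ, N ≤ n → P n a b = 0
  vac_field : ∀ (n : ℤ) (a : V), P n vac a = if n = -1 then a else 0
  creation : ∀ a : V, P (-1) a vac = a
  creation_pos : ∀ (a : V) (n : ℤ), 0 ≤ n → P n a vac = 0
  D_vac : D vac = 0
  transl_inv : ∀ (n : ℤ) (a b : V), P n (D a) b = (-n : ℂ) • P (n - 1) a b
  D_deriv : ∀ (n : ℤ) (a b : V), D (P n a b) = P n (D a) b + P n a (D b)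
  skew : ∀ (n : ℤ) (a b : V),
    P n a b = ∑ᶠ j : ℕ, (((-1 : ℂ) ^ (n + j + 1)) / (j.factorial : ℂ)) • (D ^ j) (P (n + j) b a)
  borcherds : ∀ (m k : ℤ) (a b c : V),
    P m a (P k b c) - P k b (P m a c)
      = ∑ᶠ j : ℕ, ((Ring.choose m j : ℤ) : ℂ) • P (m + k - j) (P j a b) c

namespace VertexAlgebra

variable {V : Type*} [AddCommGroup V] [Module ℂ V] (W : VertexAlgebra V)

/-- An ideal of a vertex algebra: a `ℂ[T]`-submodule closed under all products with
arbitrary elements of `V`. -/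
def IsIdeal (I : Submodule ℂ V) : Prop :=
  (∀ x ∈ I, W.D x ∈ I) ∧ ∀ (a : V), ∀ b ∈ I, ∀ n : ℤ, W.P n a b ∈ I

/-- `A · B`: the span of all products `a_{(j)} b`, `a ∈ A`, `b ∈ B`, `j ∈ ℤ`. -/
def prodSpan (A B : Submodule ℂ V) : Submodule ℂ V :=
  Submodule.span ℂ {x | ∃ a ∈ A, ∃ b ∈ B, ∃ j : ℤ, x = W.P j a b}

/-- `[A, B]`: the span of all products `a_{(j)} b`, `a ∈ A`, `b ∈ B`, `j ≥ 0`. -/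
def posSpan (A B : Submodule ℂ V) : Submodule ℂ V :=
  Submodule.span ℂ {x | ∃ a ∈ A, ∃ b ∈ B, ∃ j : ℕ, x = W.P j a b}

/-- The sequence `I^1 = I`, `I^{n+1} = I^n · I^n` (indexed so that `nilSeq I n = I^{n+1}`). -/
def nilSeq (I : Submodule ℂ V) : ℕ → Submodule ℂ V
  | 0 => I
  | n + 1 => W.prodSpan (nilSeq I n) (nilSeq I n)

/-- A nil-ideal: an ideal whose sequence of iterated self-products vanishes. -/
def IsNilIdeal (I : Submodule ℂ V) : Prop :=
  W.IsIdeal I ∧ ∃ n : ℕ, W.nilSeq I n = ⊥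

/-- A vertex algebra is finite if it is a finitely generated `ℂ[T]`-module. -/
def IsFinite : Prop :=
  ∃ s : Finset V, ∀ v : V,
    v ∈ Submodule.span ℂ {x | ∃ g ∈ s, ∃ k : ℕ, x = (W.D ^ k) g}

/-- Abelian ideal. -/
def IsAbelianIdeal (I : Submodule ℂ V) : Prop :=
  W.IsIdeal I ∧ ∀ a ∈ I, ∀ b ∈ I, ∀ n : ℤ, W.P n a b = 0

end VertexAlgebra

namespace VertexAlgebra

variable {V : Type*} [AddCommGroup V] [Module ℂ V]

/-- `ProdWith W a x k` : `x` is the value of a product of elements of `V`, under arbitrary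
`j`-products and parenthesizations, containing (marked occurrences of) `a` at least `k` times. -/
inductive ProdWith (W : VertexAlgebra V) (a : V) : V → ℕ → Prop
  | marked : ProdWith W a a 1
  | unmarked (v : V) : ProdWith W a v 0
  | node {x y : V} {k l : ℕ} (n : ℤ) :
      ProdWith W a x k → ProdWith W a y l → ProdWith W a (W.P n x y) (k + l)

/-- `a` is strongly nilpotent of degree `d`: every product of elements of `V` containing `a`
at least `d` times vanishes. -/
def StronglyNilpotent (W : VertexAlgebra V) (a : V) (d : ℕ) : Prop :=
  ∀ (x : V) (k : ℕ), ProdWith W a x k → d ≤ k → x = 0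

end VertexAlgebra

open VertexAlgebra in
/-- a strongly nilpotent element of degree two generates an abelian ideal. -/
theorem degree_two_generates_abelian_ideal {V : Type*} [AddCommGroup V] [Module ℂ V]
    (W : VertexAlgebra V) (a : V) (ha : W.StronglyNilpotent a 2) :
    ∀ x ∈ sInf {I : Submodule ℂ V | W.IsIdeal I ∧ a ∈ I},
      ∀ y ∈ sInf {I : Submodule ℂ V | W.IsIdeal I ∧ a ∈ I},
        ∀ n : ℤ, W.P n x y = 0 := by
  classical
  -- `D x = x_{(-2)} |0⟩` for every `x`.
  have hD : ∀ x : V, W.D x = W.P (-2) x W.vac := by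
    intro x
    have h1 := W.creation (W.D x)
    have h2 := W.transl_inv (-1) x W.vac
    rw [h2] at h1
    norm_num at h1
    exact h1.symm
  set S : Set V := {x | ∃ k, 1 ≤ k ∧ ProdWith W a x k} with hS
  set J : Submodule ℂ V := Submodule.span ℂ S with hJdef
  have haS : a ∈ S := ⟨1, le_refl 1, ProdWith.marked⟩
  have haJ : a ∈ J := Submodule.subset_span haS
  have hDJ : ∀ x ∈ J, W.D x ∈ J := by
    intro x hx
    induction hx using Submodule.span_induction with
    | mem v hv =>
      obtain ⟨k, hk, hp⟩ := hv
      rw [hD]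
      exact Submodule.subset_span ⟨k + 0, by omega, ProdWith.node (-2) hp (ProdWith.unmarked W.vac)⟩
    | zero => simp
    | add u v _ _ hu hv => rw [map_add]; exact J.add_mem hu hv
    | smul c u _ hu => rw [map_smul]; exact J.smul_mem c hu
  have hPJ : ∀ (b : V), ∀ x ∈ J, ∀ n : ℤ, W.P n b x ∈ J := by
    intro b x hx n
    induction hx using Submodule.span_induction with
    | mem v hv =>
      obtain ⟨k, hk, hp⟩ := hv
      exact Submodule.subset_span ⟨0 + k, by omega, ProdWith.node n (ProdWith.unmarked b) hp⟩
    | zero => simp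
    | add u v _ _ hu hv => rw [map_add]; exact J.add_mem hu hv
    | smul c u _ hu => rw [map_smul]; exact J.smul_mem c hu
  have hIdeal : W.IsIdeal J := ⟨hDJ, hPJ⟩
  have hle : sInf {I : Submodule ℂ V | W.IsIdeal I ∧ a ∈ I} ≤ J :=
    sInf_le ⟨hIdeal, haJ⟩
  intro x hx y hy n
  have hx' : x ∈ J := hle hx
  have hy' : y ∈ J := hle hy
  clear hx hy
  induction hx' using Submodule.span_induction with
  | mem u hu =>
    obtain ⟨k, hk, hpu⟩ := hu
    induction hy' using Submodule.span_induction with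
    | mem v hv =>
      obtain ⟨l, hl, hpv⟩ := hv
      exact ha _ (k + l) (ProdWith.node n hpu hpv) (by omega)
    | zero => simp
    | add u' v' _ _ hu' hv' => rw [map_add, hu', hv', add_zero]
    | smul c u' _ hu' => rw [map_smul, hu', smul_zero]
  | zero => simp
  | add u' v' _ _ hu' hv' =>
    rw [map_add, LinearMap.add_apply, hu' , hv', add_zero]
  | smul c u' _ hu' =>
    rw [map_smul, LinearMap.smul_apply, hu', smul_zero]
end

section
/- A vertex algebra $V$ possesses a non-zero strongly nilpotent element if and only if it contains a non-zero abelian ideal. -/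
open scoped BigOperators

namespace VertexAlgebra

variable {V : Type*} [AddCommGroup V] [Module ℂ V]

private lemma finsum_mem' (p : Submodule ℂ V) (f : ℕ → V) (h : ∀ i, f i ∈ p) :
    (∑ᶠ i, f i) ∈ p := by
  by_cases hf : (Function.support f).Finite
  · rw [finsum_eq_sum f hf]
    exact Submodule.sum_mem _ fun i _ => h i
  · rw [finsum_of_infinite_support hf]
    exact p.zero_mem

private lemma D_eq_P (W : VertexAlgebra V) (a : V) : W.D a = W.P (-2) a W.vac := by
  have h := W.transl_inv (-1) a W.vac
  rw [W.creation (W.D a)] at h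
  norm_num at h
  exact h

private lemma pow_D_mem (W : VertexAlgebra V) {I : Submodule ℂ V} (hI : W.IsIdeal I)
    (j : ℕ) {z : V} (hz : z ∈ I) : (W.D ^ j) z ∈ I := by
  induction j generalizing z with
  | zero => simpa using hz
  | succ j ih =>
    rw [pow_succ, Module.End.mul_apply]
    exact ih (hI.1 z hz)

private lemma left_mem (W : VertexAlgebra V) {I : Submodule ℂ V} (hI : W.IsIdeal I)
    {x : V} (hx : x ∈ I) (n : ℤ) (y : V) : W.P n x y ∈ I := by
  rw [W.skew n x y]
  apply finsum_mem'
  intro j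
  exact Submodule.smul_mem _ _ (W.pow_D_mem hI j (hI.2 y x hx (n + j)))

end VertexAlgebra

open VertexAlgebra in
/-- a vertex algebra has a non-zero strongly nilpotent element iff it has a
non-zero abelian ideal. -/
theorem strongly_nilpotent_iff_abelian_ideal {V : Type*} [AddCommGroup V] [Module ℂ V]
    (W : VertexAlgebra V) :
    (∃ a : V, a ≠ 0 ∧ ∃ d : ℕ, W.StronglyNilpotent a d) ↔
      (∃ I : Submodule ℂ V, W.IsAbelianIdeal I ∧ I ≠ ⊥) := by
  constructor
  · rintro ⟨a, ha, d, hd⟩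
    set S : Set ℕ := {k | ∃ x, x ≠ 0 ∧ ProdWith W a x k} with hS
    have h1 : 1 ∈ S := ⟨a, ha, ProdWith.marked⟩
    have hbdd : BddAbove S := by
      refine ⟨d, fun k hk => ?_⟩
      obtain ⟨x, hx, hp⟩ := hk
      by_contra h
      exact hx (hd x k hp (le_of_lt (not_le.1 h)))
    set n := sSup S with hn
    have hnS : n ∈ S := Nat.sSup_mem ⟨1, h1⟩ hbdd
    have hn1 : 1 ≤ n := le_csSup hbdd h1
    have hgt : ∀ (x : V) (k : ℕ), ProdWith W a x k → n < k → x = 0 := by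
      intro x k hp hlt
      by_contra hx
      exact absurd (le_csSup hbdd ⟨x, hx, hp⟩) (not_le.2 hlt)
    set G : Set V := {x | ProdWith W a x n} with hG
    set I := Submodule.span ℂ G with hI
    have hDspan : ∀ (x : V) (k : ℕ), ProdWith W a x k →
        W.D x ∈ Submodule.span ℂ {y | ProdWith W a y k} := by
      intro x k hp
      induction hp with
      | marked =>
        rw [W.D_eq_P a]
        refine Submodule.subset_span ?_
        have h := ProdWith.node (W := W) (a := a) (-2) ProdWith.marked
          (ProdWith.unmarked W.vac)
        simpa using h
      | unmarked v => exact Submodule.subset_span (ProdWith.unmarked (W.D v))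
      | @node x y k l m hx hy ihx ihy =>
        rw [W.D_deriv]
        refine Submodule.add_mem _ ?_ ?_
        · have hmap : Submodule.map ((W.P m).flip y)
              (Submodule.span ℂ {z | ProdWith W a z k})
              ≤ Submodule.span ℂ {z | ProdWith W a z (k + l)} := by
            rw [Submodule.map_span]
            refine Submodule.span_le.2 ?_
            rintro _ ⟨z, hz, rfl⟩
            exact Submodule.subset_span (ProdWith.node m hz hy)
          exact hmap ⟨_, ihx, rfl⟩
        · have hmap : Submodule.map (W.P m x)
              (Submodule.span ℂ {z | ProdWith W a z l})
              ≤ Submodule.span ℂ {z | ProdWith W a z (k + l)} := by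
            rw [Submodule.map_span]
            refine Submodule.span_le.2 ?_
            rintro _ ⟨z, hz, rfl⟩
            exact Submodule.subset_span (ProdWith.node m hx hz)
          exact hmap ⟨_, ihy, rfl⟩
    refine ⟨I, ⟨⟨?_, ?_⟩, ?_⟩, ?_⟩
    · intro x hx
      have hmap : Submodule.map W.D I ≤ I := by
        rw [hI, Submodule.map_span]
        refine Submodule.span_le.2 ?_
        rintro _ ⟨g, hg, rfl⟩
        exact hDspan g n hg
      exact hmap ⟨x, hx, rfl⟩
    · intro b c hc m
      have hmap : Submodule.map (W.P m b) I ≤ I := by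
        rw [hI, Submodule.map_span]
        refine Submodule.span_le.2 ?_
        rintro _ ⟨g, hg, rfl⟩
        refine Submodule.subset_span ?_
        have h := ProdWith.node (W := W) (a := a) m (ProdWith.unmarked b) hg
        simpa [hG] using h
      exact hmap ⟨c, hc, rfl⟩
    · intro p hp q hq m
      induction hp, hq using Submodule.span_induction₂ with
      | mem_mem x y hx hy => exact hgt _ (n + n) (ProdWith.node m hx hy) (by omega)
      | zero_left y hy => simp
      | zero_right x hx => simp
      | add_left x y z hx hy hz h1 h2 => simp [h1, h2]
      | add_right x y z hx hy hz h1 h2 => simp [h1, h2]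
      | smul_left r x y hx hy h => simp [h]
      | smul_right r x y hx hy h => simp [h]
    · obtain ⟨x0, hx0, hpx0⟩ := hnS
      intro hbot
      have hmem : x0 ∈ I := Submodule.subset_span hpx0
      rw [hbot] at hmem
      exact hx0 (Submodule.mem_bot ℂ |>.1 hmem)
  · rintro ⟨I, ⟨hIdeal, hab⟩, hne⟩
    obtain ⟨a, haI, ha0⟩ := Submodule.exists_mem_ne_zero_of_ne_bot hne
    refine ⟨a, ha0, 2, ?_⟩
    have memI : ∀ (x : V) (k : ℕ), ProdWith W a x k → 1 ≤ k → x ∈ I := by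
      intro x k hp
      induction hp with
      | marked => exact fun _ => haI
      | unmarked v => intro h; omega
      | @node x y k l m hx hy ihx ihy =>
        intro _
        rcases Nat.eq_zero_or_pos k with hk | hk
        · subst hk
          exact hIdeal.2 x y (ihy (by omega)) m
        · exact W.left_mem hIdeal (ihx hk) m y
    intro x k hp
    induction hp with
    | marked => intro h; omega
    | unmarked v => intro h; omega
    | @node x y k l m hx hy ihx ihy =>
      intro hkl
      rcases Nat.eq_zero_or_pos k with hk | hk
      · rw [ihy (by omega), map_zero]
      · rcases Nat.eq_zero_or_pos l with hl | hl
        · rw [ihx (by omega), map_zero, LinearMap.zero_apply]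
        · exact hab x (memI x k hx hk) y (memI y l hy hl) m
end

section
/- In any vertex algebra $V$, the sum of two nil-ideals is a nil-ideal. Consequently, if $V$ is a finitely generated $\mathbb{C}[T]$-module, then $V$ has a unique maximal nil-ideal (the nilradical). -/
open scoped BigOperators

namespace VANil

open VertexAlgebra

variable {V : Type*} [AddCommGroup V] [Module ℂ V] (W : VertexAlgebra V)

theorem finsum_mem_submodule (L : Submodule ℂ V) (f : ℕ → V) (h : ∀ i, f i ∈ L) :
    ∑ᶠ i, f i ∈ L := by
  by_cases hf : (Function.support f).Finite
  · rw [finsum_eq_sum f hf]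
    exact Submodule.sum_mem _ fun i _ => h i
  · rw [finsum_of_infinite_support hf]
    exact L.zero_mem

theorem pow_D_mem {I : Submodule ℂ V} (hD : ∀ x ∈ I, W.D x ∈ I) :
    ∀ (j : ℕ) (x : V), x ∈ I → (W.D ^ j) x ∈ I := by
  intro j
  induction j with
  | zero => intro x hx; simpa using hx
  | succ n ih =>
    intro x hx
    rw [pow_succ, Module.End.mul_apply]
    exact ih _ (hD x hx)

/-- left absorption via skew symmetry -/
theorem mem_left {I : Submodule ℂ V} (hI : W.IsIdeal I) {a : V} (ha : a ∈ I) (b : V) (n : ℤ) :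
    W.P n a b ∈ I := by
  rw [W.skew n a b]
  refine finsum_mem_submodule I _ fun j => ?_
  exact Submodule.smul_mem _ _ (pow_D_mem W hI.1 j _ (hI.2 b a ha _))

theorem isIdeal_sup {I J : Submodule ℂ V} (hI : W.IsIdeal I) (hJ : W.IsIdeal J) :
    W.IsIdeal (I ⊔ J) := by
  constructor
  · intro x hx
    rw [Submodule.mem_sup] at hx ⊢
    obtain ⟨y, hy, z, hz, rfl⟩ := hx
    exact ⟨W.D y, hI.1 y hy, W.D z, hJ.1 z hz, (map_add _ _ _).symm⟩
  · intro a b hb n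
    rw [Submodule.mem_sup] at hb ⊢
    obtain ⟨y, hy, z, hz, rfl⟩ := hb
    exact ⟨W.P n a y, hI.2 a y hy n, W.P n a z, hJ.2 a z hz n, (map_add _ _ _).symm⟩

theorem prodSpan_mono {A B A' B' : Submodule ℂ V} (hA : A ≤ A') (hB : B ≤ B') :
    W.prodSpan A B ≤ W.prodSpan A' B' := by
  apply Submodule.span_mono
  rintro x ⟨a, ha, b, hb, j, rfl⟩
  exact ⟨a, hA ha, b, hB hb, j, rfl⟩

theorem prodSpan_sup_le {A : Submodule ℂ V} {J : Submodule ℂ V} (hJ : W.IsIdeal J) :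
    W.prodSpan (A ⊔ J) (A ⊔ J) ≤ W.prodSpan A A ⊔ J := by
  rw [prodSpan, Submodule.span_le]
  rintro x ⟨a, ha, b, hb, j, rfl⟩
  rw [Submodule.mem_sup] at ha hb
  obtain ⟨a1, ha1, a2, ha2, rfl⟩ := ha
  obtain ⟨b1, hb1, b2, hb2, rfl⟩ := hb
  have : W.P j (a1 + a2) (b1 + b2)
      = W.P j a1 b1 + (W.P j a1 b2 + (W.P j a2 b1 + W.P j a2 b2)) := by
    simp [map_add]; abel
  rw [this]
  refine add_mem (Submodule.mem_sup_left (Submodule.subset_span ⟨a1, ha1, b1, hb1, j, rfl⟩)) ?_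
  refine add_mem (Submodule.mem_sup_right (hJ.2 a1 b2 hb2 j)) ?_
  exact add_mem (Submodule.mem_sup_right (mem_left W hJ ha2 b1 j))
    (Submodule.mem_sup_right (hJ.2 a2 b2 hb2 j))

theorem nilSeq_mono {A B : Submodule ℂ V} (h : A ≤ B) (n : ℕ) :
    W.nilSeq A n ≤ W.nilSeq B n := by
  induction n with
  | zero => exact h
  | succ n ih => exact prodSpan_mono W ih ih

theorem nilSeq_add (I : Submodule ℂ V) (m k : ℕ) :
    W.nilSeq I (m + k) = W.nilSeq (W.nilSeq I m) k := by
  induction k with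
  | zero => rfl
  | succ n ih =>
    show W.prodSpan (W.nilSeq I (m + n)) (W.nilSeq I (m + n)) = _
    rw [ih]; rfl

theorem nilSeq_sup_le {I J : Submodule ℂ V} (hJ : W.IsIdeal J) (n : ℕ) :
    W.nilSeq (I ⊔ J) n ≤ W.nilSeq I n ⊔ J := by
  induction n with
  | zero => exact le_refl _
  | succ n ih =>
    calc W.nilSeq (I ⊔ J) (n + 1)
        ≤ W.prodSpan (W.nilSeq I n ⊔ J) (W.nilSeq I n ⊔ J) := prodSpan_mono W ih ih
      _ ≤ W.nilSeq I (n + 1) ⊔ J := prodSpan_sup_le W hJ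

theorem sup_nil {I J : Submodule ℂ V} (hI : W.IsNilIdeal I) (hJ : W.IsNilIdeal J) :
    W.IsNilIdeal (I ⊔ J) := by
  obtain ⟨hIi, m, hm⟩ := hI
  obtain ⟨hJi, k, hk⟩ := hJ
  refine ⟨isIdeal_sup W hIi hJi, m + k, ?_⟩
  have h1 : W.nilSeq (I ⊔ J) m ≤ J := by
    have := nilSeq_sup_le W hJi (I := I) m
    rwa [hm, bot_sup_eq] at this
  rw [nilSeq_add]
  refine le_bot_iff.mp ?_
  calc W.nilSeq (W.nilSeq (I ⊔ J) m) k ≤ W.nilSeq J k := nilSeq_mono W h1 k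
    _ = ⊥ := hk


theorem isNilIdeal_bot : W.IsNilIdeal (⊥ : Submodule ℂ V) := by
  refine ⟨⟨fun x hx => ?_, fun a b hb n => ?_⟩, 0, rfl⟩
  · simp only [Submodule.mem_bot] at hx ⊢
    simp [hx]
  · simp only [Submodule.mem_bot] at hb ⊢
    simp [hb]

open Module Polynomial in
theorem nilradical_exists (hfin : W.IsFinite) :
    ∃ N : Submodule ℂ V, W.IsNilIdeal N ∧ ∀ I : Submodule ℂ V, W.IsNilIdeal I → I ≤ N := by
  classical
  obtain ⟨s, hs⟩ := hfin
  set e := Module.AEval'.of W.D with he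
  have hpow : ∀ (k : ℕ) (g : V), (X : ℂ[X]) ^ k • e g = e ((W.D ^ k) g) := by
    intro k
    induction k with
    | zero => intro g; simp
    | succ n ih =>
      intro g
      rw [pow_succ, mul_smul, Module.AEval'.X_smul_of, ih, pow_succ, Module.End.mul_apply]
  haveI hfg : Module.Finite ℂ[X] (Module.AEval' W.D) := by
    constructor
    rw [Submodule.fg_def]
    refine ⟨e '' ↑s, Set.Finite.image _ s.finite_toSet, ?_⟩
    rw [Submodule.eq_top_iff']
    intro v
    have hv := hs (e.symm v)
    have key : Submodule.span ℂ {x | ∃ g ∈ s, ∃ k : ℕ, x = (W.D ^ k) g}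
        ≤ ((Submodule.span ℂ[X] (e '' ↑s)).restrictScalars ℂ).comap
            (e.toLinearMap : V →ₗ[ℂ] Module.AEval' W.D) := by
      rw [Submodule.span_le]
      rintro x ⟨g, hg, k, rfl⟩
      show (e ((W.D ^ k) g) : Module.AEval' W.D) ∈ Submodule.span ℂ[X] (e '' ↑s)
      rw [← hpow]
      exact Submodule.smul_mem _ _ (Submodule.subset_span ⟨g, hg, rfl⟩)
    have := key hv
    simpa using this
  haveI : IsNoetherian ℂ[X] (Module.AEval' W.D) := inferInstance
  set Φ := Module.AEval.mapSubmodule ℂ V W.D with hΦ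
  set S : Set (Submodule ℂ[X] (Module.AEval' W.D)) :=
    {q | W.IsNilIdeal ((Φ.symm q : (Algebra.lsmul ℂ ℂ V W.D).invtSubmodule) : Submodule ℂ V)}
    with hS
  have hbotmem : (⊥ : Submodule ℂ[X] (Module.AEval' W.D)) ∈ S := by
    have hb : ((Φ.symm ⊥ : (Algebra.lsmul ℂ ℂ V W.D).invtSubmodule) : Submodule ℂ V) = ⊥ := by
      ext m
      rw [Module.AEval.mem_mapSubmodule_symm_apply]
      simp
    rw [hS, Set.mem_setOf_eq, hb]
    exact isNilIdeal_bot W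
  obtain ⟨q, hqS, hqmax⟩ := set_has_maximal_iff_noetherian.mpr inferInstance S ⟨⊥, hbotmem⟩
  set N : Submodule ℂ V := ((Φ.symm q : (Algebra.lsmul ℂ ℂ V W.D).invtSubmodule) : Submodule ℂ V)
    with hN
  refine ⟨N, hqS, ?_⟩
  intro I hI
  have hKnil : W.IsNilIdeal (I ⊔ N) := sup_nil W hI hqS
  have hKinvt : (I ⊔ N) ∈ (Algebra.lsmul ℂ ℂ V W.D).invtSubmodule := by
    rw [Module.End.mem_invtSubmodule]
    intro x hx
    exact hKnil.1.1 x hx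
  set qK := Φ ⟨I ⊔ N, hKinvt⟩ with hqK
  have hsymm : ((Φ.symm qK : (Algebra.lsmul ℂ ℂ V W.D).invtSubmodule) : Submodule ℂ V)
      = I ⊔ N := by rw [hqK, Φ.symm_apply_apply]
  have hqKS : qK ∈ S := by rw [hS, Set.mem_setOf_eq, hsymm]; exact hKnil
  have hle : q ≤ qK := by
    conv_lhs => rw [← Φ.apply_symm_apply q]
    rw [hqK, Φ.le_iff_le]
    show N ≤ I ⊔ N
    exact le_sup_right
  have heq : q = qK := by
    by_contra hne
    exact hqmax qK hqKS (lt_of_le_of_ne hle hne)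
  have : I ⊔ N = N := by
    rw [← hsymm, ← heq]
  rw [← this]
  exact le_sup_left

end VANil

open VertexAlgebra in
/-- the sum of two nil-ideals is a nil-ideal; consequently a finite vertex
algebra has a unique maximal nil-ideal (the nilradical). -/
theorem sum_of_nilideals_and_nilradical {V : Type*} [AddCommGroup V] [Module ℂ V]
    (W : VertexAlgebra V) :
    (∀ I J : Submodule ℂ V, W.IsNilIdeal I → W.IsNilIdeal J → W.IsNilIdeal (I ⊔ J)) ∧
    (W.IsFinite → ∃ N : Submodule ℂ V, W.IsNilIdeal N ∧
      ∀ I : Submodule ℂ V, W.IsNilIdeal I → I ≤ N) :=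
  ⟨fun _ _ hI hJ => VANil.sup_nil W hI hJ, VANil.nilradical_exists W⟩
end

section
/- Let $C$ be a finitely generated torsion $\mathbb{C}[\partial]$-module on which $\partial$ acts invertibly. Then every central extension of the Virasoro conformal algebra by $C$ is trivial: if $[L_\lambda L] = (\partial + 2\lambda)L + p(\lambda)$ with $p(\lambda)\in C[\lambda]$ defines a Lie conformal algebra, then replacing $L$ by $L + \partial^{-1}p(0)$ yields the standard Virasoro bracket. -/
open scoped BigOperators

/-- A Lie conformal algebra over `ℂ`: a `ℂ[∂]`-module `R` with a `λ`-bracket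
`[a λ b] = ∑ₙ (λ^n/n!) • br n a b`. -/
structure LieConformalAlgebra (R : Type*) [AddCommGroup R] [Module ℂ R] where
  der : R →ₗ[ℂ] R
  br : ℕ → R →ₗ[ℂ] R →ₗ[ℂ] R
  locality : ∀ a b : R, ∃ N : ℕ, ∀ n : ℕ, N ≤ n → br n a b = 0
  sesqui_left : ∀ (n : ℕ) (a b : R),
    br n (der a) b = if n = 0 then 0 else (-(n : ℂ)) • br (n - 1) a b
  sesqui_right : ∀ (n : ℕ) (a b : R),
    br n a (der b) = der (br n a b) + if n = 0 then 0 else (n : ℂ) • br (n - 1) a b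
  skew : ∀ (n : ℕ) (a b : R),
    br n a b = -∑ᶠ j : ℕ, (((-1 : ℂ) ^ (n + j)) / (j.factorial : ℂ)) • (der ^ j) (br (n + j) b a)
  jacobi : ∀ (m n : ℕ) (a b c : R),
    br m a (br n b c) - br n b (br m a c)
      = ∑ j ∈ Finset.range (m + 1), (m.choose j : ℂ) • br (m + n - j) (br j a b) c

namespace LieConformalAlgebra

variable {R : Type*} [AddCommGroup R] [Module ℂ R] (L : LieConformalAlgebra R)

/-- A torsion element of the underlying `ℂ[∂]`-module. -/
def IsTorsion (x : R) : Prop :=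
  ∃ p : Polynomial ℂ, p ≠ 0 ∧ Polynomial.aeval L.der p x = 0

/-- `R` is a finitely generated `ℂ[∂]`-module. -/
def IsFinite : Prop :=
  ∃ s : Finset R, ∀ r : R,
    r ∈ Submodule.span ℂ {x | ∃ g ∈ s, ∃ k : ℕ, x = (L.der ^ k) g}

/-- A `ℂ[∂]`-submodule `S` that is a finitely generated `ℂ[∂]`-module. -/
def IsFiniteSub (S : Submodule ℂ R) : Prop :=
  ∃ s : Finset R, (↑s : Set R) ⊆ (S : Set R) ∧ ∀ r ∈ S,
    r ∈ Submodule.span ℂ {x | ∃ g ∈ s, ∃ k : ℕ, x = (L.der ^ k) g}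

/-- A subalgebra: a `ℂ[∂]`-submodule closed under the `λ`-bracket. -/
def IsSubalgebra (S : Submodule ℂ R) : Prop :=
  (∀ x ∈ S, L.der x ∈ S) ∧ ∀ a ∈ S, ∀ b ∈ S, ∀ n : ℕ, L.br n a b ∈ S

end LieConformalAlgebra

open LieConformalAlgebra in
/-- every central extension of the Virasoro conformal algebra by a finitely
generated torsion `ℂ[∂]`-module `C` on which `∂` acts invertibly is trivial: the generator
`L` can be corrected by `∂⁻¹p(0) ∈ C` so as to satisfy the standard Virasoro bracket. -/
theorem virasoro_central_extension_trivial {R : Type*} [AddCommGroup R] [Module ℂ R]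
    (L : LieConformalAlgebra R) (Lv : R) (C : Submodule ℂ R)
    -- `C` is `∂`-stable and `∂` acts invertibly on it
    (hDC : ∀ c ∈ C, L.der c ∈ C)
    (hsurj : ∀ c ∈ C, ∃ d ∈ C, L.der d = c)
    (hinj : ∀ c ∈ C, L.der c = 0 → c = 0)
    -- `C` is a finitely generated torsion `ℂ[∂]`-module
    (hfg : L.IsFiniteSub C)
    (htor : ∀ c ∈ C, ∃ p : Polynomial ℂ, p ≠ 0 ∧ Polynomial.aeval L.der p c = 0)
    -- `C` is central
    (hcent : ∀ c ∈ C, ∀ (r : R) (n : ℕ), L.br n c r = 0 ∧ L.br n r c = 0)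
    -- `R = ℂ[∂]L ⊕ C`
    (hspan : ∀ r : R, ∃ (f : Polynomial ℂ), ∃ c ∈ C, r = Polynomial.aeval L.der f Lv + c)
    (hfree : ∀ (f : Polynomial ℂ), ∀ c ∈ C, Polynomial.aeval L.der f Lv + c = 0 → f = 0 ∧ c = 0)
    -- `[L λ L] = (∂ + 2λ)L + p(λ)` with `p(λ) ∈ C[λ]`
    (p : ℕ → R) (hp : ∀ n, p n ∈ C)
    (hbr0 : L.br 0 Lv Lv = L.der Lv + p 0)
    (hbr1 : L.br 1 Lv Lv = (2 : ℂ) • Lv + p 1)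
    (hbrn : ∀ n : ℕ, 2 ≤ n → L.br n Lv Lv = p n) :
    ∃ c ∈ C, L.der c = p 0 ∧
      L.br 0 (Lv + c) (Lv + c) = L.der (Lv + c) ∧
      L.br 1 (Lv + c) (Lv + c) = (2 : ℂ) • (Lv + c) ∧
      ∀ n : ℕ, 2 ≤ n → L.br n (Lv + c) (Lv + c) = 0 := by
  obtain ⟨c, hcC, hdc⟩ := hsurj (p 0) (hp 0)
  -- brackets of Lv+c equal brackets of Lv
  have hbrc : ∀ n : ℕ, L.br n (Lv + c) (Lv + c) = L.br n Lv Lv := by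
    intro n
    simp only [map_add, LinearMap.add_apply,
      (hcent c hcC Lv n).1, (hcent c hcC c n).1, (hcent c hcC Lv n).2]
    abel
  -- left bracket with elements of C vanishes
  have hcL : ∀ n : ℕ, ∀ x ∈ C, ∀ r : R, L.br n x r = 0 := fun n x hx r => (hcent x hx r n).1
  have hcR : ∀ n : ℕ, ∀ x ∈ C, ∀ r : R, L.br n r x = 0 := fun n x hx r => (hcent x hx r n).2
  -- Key: p n = 0 for n ≥ 2
  have hpn : ∀ m : ℕ, 2 ≤ m → p m = 0 := by
    intro m hm
    have hm1 : m ≠ 0 := by omega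
    have J := L.jacobi m 0 Lv Lv Lv
    -- compute the sum
    have hsum : ∑ j ∈ Finset.range (m + 1), (m.choose j : ℂ) • L.br (m + 0 - j) (L.br j Lv Lv) Lv
        = ((-(m : ℂ)) • L.br (m - 1) Lv Lv) + ((m : ℂ) • ((2 : ℂ) • L.br (m - 1) Lv Lv)) := by
      have hsplit : ∑ j ∈ Finset.range (m + 1), (m.choose j : ℂ) • L.br (m + 0 - j) (L.br j Lv Lv) Lv
          = ∑ j ∈ Finset.range 2, (m.choose j : ℂ) • L.br (m + 0 - j) (L.br j Lv Lv) Lv := by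
        refine (Finset.sum_subset ?_ ?_).symm
        · intro j hj; simp only [Finset.mem_range] at hj ⊢; omega
        · intro j hj hj2
          simp only [Finset.mem_range] at hj hj2
          have hj' : 2 ≤ j := by omega
          rw [hbrn j hj', hcL _ (p j) (hp j) Lv, smul_zero]
      rw [hsplit, Finset.sum_range_succ, Finset.sum_range_one]
      have h0 : L.br (m + 0 - 0) (L.br 0 Lv Lv) Lv = (-(m : ℂ)) • L.br (m - 1) Lv Lv := by
        rw [hbr0]
        simp only [map_add, LinearMap.add_apply, hcL _ (p 0) (hp 0) Lv, add_zero]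
        rw [L.sesqui_left]
        simp [hm1]
      have h1 : L.br (m + 0 - 1) (L.br 1 Lv Lv) Lv = (2 : ℂ) • L.br (m - 1) Lv Lv := by
        rw [hbr1]
        simp only [map_add, map_smul, LinearMap.add_apply, LinearMap.smul_apply,
          hcL _ (p 1) (hp 1) Lv, add_zero]
      rw [h0, h1]
      simp
    rw [hsum] at J
    have hlhs1 : L.br m Lv (L.br 0 Lv Lv) = L.der (p m) + (m : ℂ) • L.br (m - 1) Lv Lv := by
      rw [hbr0, map_add, hcR _ (p 0) (hp 0) Lv, add_zero, L.sesqui_right, hbrn m hm]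
      simp [hm1]
    have hlhs2 : L.br 0 Lv (L.br m Lv Lv) = 0 := by
      rw [hbrn m hm, hcR _ (p m) (hp m) Lv]
    rw [hlhs1, hlhs2, sub_zero] at J
    have hd : L.der (p m) = 0 := by
      have := J
      rw [smul_smul] at this
      have h2 : L.der (p m) = ((-(m : ℂ)) + (m : ℂ) * 2 - (m : ℂ)) • L.br (m - 1) Lv Lv := by
        rw [sub_smul, add_smul, neg_smul]
        linear_combination (norm := module) this
      rw [h2]
      ring_nf
      simp
    exact hinj (p m) (hp m) hd
  -- Key: der (p 1) = 2 • p 0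
  have hp1 : p 1 = (2 : ℂ) • c := by
    have J := L.jacobi 1 0 Lv Lv Lv
    have hsum : ∑ j ∈ Finset.range (1 + 1), ((1 : ℕ).choose j : ℂ) • L.br (1 + 0 - j) (L.br j Lv Lv) Lv
        = -(L.der Lv + p 0) + (2 : ℂ) • (L.der Lv + p 0) := by
      rw [Finset.sum_range_succ, Finset.sum_range_one]
      have h0 : L.br (1 + 0 - 0) (L.br 0 Lv Lv) Lv = -(L.der Lv + p 0) := by
        rw [hbr0]
        simp only [map_add, LinearMap.add_apply, hcL _ (p 0) (hp 0) Lv, add_zero]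
        rw [L.sesqui_left]
        simp only [if_neg one_ne_zero, hbr0]
        push_cast
        module
      have h1 : L.br (1 + 0 - 1) (L.br 1 Lv Lv) Lv = (2 : ℂ) • (L.der Lv + p 0) := by
        rw [hbr1]
        simp only [map_add, map_smul, LinearMap.add_apply, LinearMap.smul_apply,
          hcL _ (p 1) (hp 1) Lv, add_zero, hbr0]
      rw [h0, h1]
      simp
    rw [hsum] at J
    have hlhs1 : L.br 1 Lv (L.br 0 Lv Lv)
        = L.der ((2 : ℂ) • Lv + p 1) + (L.der Lv + p 0) := by
      rw [hbr0, map_add, hcR _ (p 0) (hp 0) Lv, add_zero, L.sesqui_right, hbr1, hbr0]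
      simp
    have hlhs2 : L.br 0 Lv (L.br 1 Lv Lv) = (2 : ℂ) • (L.der Lv + p 0) := by
      rw [hbr1, map_add, hcR _ (p 1) (hp 1) Lv, add_zero, map_smul, hbr0]
    rw [hlhs1, hlhs2] at J
    have hd : L.der (p 1) = (2 : ℂ) • p 0 := by
      have := J
      simp only [map_add, map_smul] at this
      linear_combination (norm := module) this
    have hmem : p 1 - (2 : ℂ) • c ∈ C := C.sub_mem (hp 1) (C.smul_mem _ hcC)
    have hz : L.der (p 1 - (2 : ℂ) • c) = 0 := by
      rw [map_sub, map_smul, hdc, hd, sub_self]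
    exact sub_eq_zero.mp (hinj _ hmem hz)
  refine ⟨c, hcC, hdc, ?_, ?_, ?_⟩
  · rw [hbrc, hbr0, map_add, hdc]
  · rw [hbrc, hbr1, hp1, smul_add]
  · intro n hn
    rw [hbrc, hbrn n hn, hpn n hn]
end

section
/- Fix $N \geq 1$. All solutions $p(\partial,x) \in \mathbb{C}[\partial,x]/(\partial^{N+1})$ of the cocycle equation $(\lambda-\mu)p(\partial,\lambda+\mu) = (\partial+\lambda+2\mu)p(\partial,\lambda) - (\partial+2\lambda+\mu)p(\partial,\mu) \bmod \partial^{N+1}$ are of the form $p(\partial,\lambda) = (\partial+2\lambda)q(\partial) + c\lambda^3\partial^N \bmod \partial^{N+1}$ for some $q(\partial) \in \mathbb{C}[\partial]$ and $c \in \mathbb{C}$. -/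
open MvPolynomial

private lemma aeval_map2 {S T : Type*} [CommSemiring S] [CommSemiring T] [Algebra ℂ S]
    [Algebra ℂ T] (φ : S →ₐ[ℂ] T) (f0 f1 : S) (p : MvPolynomial (Fin 2) ℂ) :
    φ (aeval ![f0, f1] p) = aeval ![φ f0, φ f1] p := by
  rw [comp_aeval_apply]
  have : (fun i => φ (![f0, f1] i)) = ![φ f0, φ f1] := by
    funext i; fin_cases i <;> simp
  rw [this]

private lemma extract2 {S : Type*} [CommSemiring S] [Algebra ℂ S] (t : MvPolynomial (Fin 2) ℂ)
    (g : S) :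
    aeval ![(0 : S), g] t = Polynomial.aeval g (aeval ![(0 : Polynomial ℂ), Polynomial.X] t) := by
  rw [aeval_map2 (Polynomial.aeval g) _ _ t]
  simp

private lemma extract2' {S : Type*} [CommSemiring S] [Algebra ℂ S] (t : MvPolynomial (Fin 2) ℂ)
    (g : S) :
    aeval ![g, (0 : S)] t = Polynomial.aeval g (aeval ![(Polynomial.X : Polynomial ℂ), 0] t) := by
  rw [aeval_map2 (Polynomial.aeval g) _ _ t]
  simp

private lemma paeval_map {S T : Type*} [CommSemiring S] [CommSemiring T] [Algebra ℂ S]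
    [Algebra ℂ T] (φ : S →ₐ[ℂ] T) (x : S) (f : Polynomial ℂ) :
    φ (Polynomial.aeval x f) = Polynomial.aeval (φ x) f :=
  (Polynomial.aeval_algHom_apply φ x f).symm

private lemma ode_classify (R : Polynomial ℂ)
    (h : Polynomial.X * Polynomial.derivative R - 3 * R + Polynomial.C (R.coeff 0)
        + 2 * Polynomial.X * Polynomial.C ((Polynomial.derivative R).coeff 0) = 0) :
    R = Polynomial.C (R.coeff 1) * Polynomial.X + Polynomial.C (R.coeff 3) * Polynomial.X ^ 3 := by
  have key : ∀ n : ℕ, (Polynomial.X * Polynomial.derivative R - 3 * R + Polynomial.C (R.coeff 0)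
      + 2 * Polynomial.X * Polynomial.C ((Polynomial.derivative R).coeff 0)).coeff n = 0 := by
    intro n; rw [h]; simp
  ext n
  match n with
  | 0 =>
    have h0 := key 0
    simp [Polynomial.mul_coeff_zero, Polynomial.coeff_derivative] at h0
    have : R.coeff 0 = 0 := by linear_combination -h0/2
    simp [this]
  | 1 => simp
  | 2 =>
    have h2 := key 2
    simp [Polynomial.coeff_X_mul, Polynomial.coeff_derivative, Polynomial.coeff_X] at h2
    have : R.coeff 2 = 0 := by linear_combination -h2
    simp [this]
  | 3 => simp
  | (n+4) =>
    have hn := key (n+4)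
    simp [Polynomial.coeff_X_mul, Polynomial.coeff_derivative, Polynomial.coeff_X] at hn
    have hne : ((n:ℂ) + 1) ≠ 0 := Nat.cast_add_one_ne_zero n
    have hz : R.coeff (n+4) * ((n:ℂ)+1) = 0 := by linear_combination hn
    rcases mul_eq_zero.mp hz with hz | hz
    · simp [hz]
    · exact absurd hz hne

private lemma X_dvd_sub_eval0 (t : MvPolynomial (Fin 2) ℂ) :
    (X 0 : MvPolynomial (Fin 2) ℂ) ∣ t - aeval ![(0 : MvPolynomial (Fin 2) ℂ), X 1] t := by
  induction t using MvPolynomial.induction_on with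
  | C a => simp
  | add p q hp hq =>
    have : p + q - aeval ![(0 : MvPolynomial (Fin 2) ℂ), X 1] (p + q)
        = (p - aeval ![(0 : MvPolynomial (Fin 2) ℂ), X 1] p)
          + (q - aeval ![(0 : MvPolynomial (Fin 2) ℂ), X 1] q) := by
      rw [map_add]; ring
    rw [this]; exact dvd_add hp hq
  | mul_X p i hp =>
    have h01 : i = 0 ∨ i = 1 := by omega
    rcases h01 with rfl | rfl
    · have : p * X 0 - aeval ![(0 : MvPolynomial (Fin 2) ℂ), X 1] (p * X 0) = X 0 * p := by
        rw [map_mul]; simp; ring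
      rw [this]; exact Dvd.intro _ rfl
    · have : p * X 1 - aeval ![(0 : MvPolynomial (Fin 2) ℂ), X 1] (p * X 1)
          = (p - aeval ![(0 : MvPolynomial (Fin 2) ℂ), X 1] p) * X 1 := by
        rw [map_mul]; simp; ring
      rw [this]; exact hp.mul_right _

/-- solutions of the Virasoro 2-cocycle equation modulo `∂^{N+1}` are exactly
`(∂+2λ)q(∂) + cλ³∂^N` modulo `∂^{N+1}`. Here `p` is a polynomial in `∂` (variable `0`) and
`x` (variable `1`); the cocycle equation lives in `ℂ[∂,λ,μ]` (variables `0,1,2`). -/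
theorem virasoro_cocycle_classification (N : ℕ) (hN : 1 ≤ N) (p : MvPolynomial (Fin 2) ℂ)
    (hp : (X 1 - X 2) * (aeval ![X 0, X 1 + X 2] p)
        - ((X 0 + X 1 + 2 * X 2) * (aeval ![X 0, X 1] p)
            - (X 0 + 2 * X 1 + X 2) * (aeval ![X 0, X 2] p))
      ∈ Ideal.span {(X 0 : MvPolynomial (Fin 3) ℂ) ^ (N + 1)}) :
    ∃ (q : Polynomial ℂ) (c : ℂ),
      p - ((X 0 + 2 * X 1) * (Polynomial.aeval (X 0 : MvPolynomial (Fin 2) ℂ) q)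
            + C c * X 1 ^ 3 * X 0 ^ N)
        ∈ Ideal.span {(X 0 : MvPolynomial (Fin 2) ℂ) ^ (N + 1)} := by
  rw [Ideal.mem_span_singleton] at hp
  -- Step 1: substitute μ ↦ 0
  set Q : Polynomial ℂ := aeval ![(Polynomial.X : Polynomial ℂ), 0] p with hQdef
  have h1 : (X 0 : MvPolynomial (Fin 2) ℂ)^(N+1) ∣ (X 0 + 2 * X 1) * Polynomial.aeval (X 0 : MvPolynomial (Fin 2) ℂ) Q - X 0 * p := by
    have hd := map_dvd (aeval ![(X 0 : MvPolynomial (Fin 2) ℂ), X 1, 0] : MvPolynomial (Fin 3) ℂ →ₐ[ℂ] MvPolynomial (Fin 2) ℂ) hp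
    rw [map_pow, map_sub, map_sub, map_mul, map_mul, map_mul] at hd
    rw [aeval_map2 (aeval ![(X 0 : MvPolynomial (Fin 2) ℂ), X 1, 0]) _ _ p,
        aeval_map2 (aeval ![(X 0 : MvPolynomial (Fin 2) ℂ), X 1, 0]) _ _ p,
        aeval_map2 (aeval ![(X 0 : MvPolynomial (Fin 2) ℂ), X 1, 0]) _ _ p] at hd
    simp only [map_add, map_mul, map_ofNat, aeval_X, Matrix.cons_val_zero, Matrix.cons_val_one,
      Matrix.head_cons, Matrix.cons_val_two, Matrix.tail_cons] at hd
    rw [extract2' p (X 0 : MvPolynomial (Fin 2) ℂ)] at hd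
    simp only [map_sub, aeval_X, Matrix.cons_val_zero, Matrix.cons_val_one, Matrix.head_cons,
      Matrix.cons_val_two, Matrix.tail_cons, sub_zero, add_zero, mul_zero] at hd
    have hXX : aeval ![(X 0 : MvPolynomial (Fin 2) ℂ), X 1] p = p := by
      have : ![(X 0 : MvPolynomial (Fin 2) ℂ), X 1] = X := by funext i; fin_cases i <;> simp
      rw [this, aeval_X_left_apply]
    rw [hXX] at hd
    obtain ⟨w, hw⟩ := hd
    exact ⟨w, by linear_combination hw⟩
  -- Step 2: constant coefficient of Q vanishes
  have hQ0 : Q.coeff 0 = 0 := by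
    have hd := map_dvd (aeval ![(0 : MvPolynomial (Fin 2) ℂ), X 1] :
      MvPolynomial (Fin 2) ℂ →ₐ[ℂ] MvPolynomial (Fin 2) ℂ) h1
    rw [map_pow, map_sub, map_mul, map_mul,
      paeval_map (aeval ![(0 : MvPolynomial (Fin 2) ℂ), X 1])] at hd
    simp only [map_add, map_mul, map_ofNat, aeval_X, Matrix.cons_val_zero, Matrix.cons_val_one,
      Matrix.head_cons, zero_pow (Nat.succ_ne_zero N), zero_mul, sub_zero, zero_add,
      zero_dvd_iff] at hd
    have haz : Polynomial.aeval (0 : MvPolynomial (Fin 2) ℂ) Q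
        = C (Q.coeff 0) := by
      rw [Polynomial.aeval_def, Polynomial.eval₂_at_zero, ← MvPolynomial.algebraMap_eq]
    rw [haz] at hd
    have h2 : (C (Q.coeff 0) : MvPolynomial (Fin 2) ℂ) = 0 := by
      rcases mul_eq_zero.mp hd with h | h
      · exact absurd h (by simp [MvPolynomial.X_ne_zero])
      · exact h
    simpa using h2
  set q1 : Polynomial ℂ := Q.divX with hq1def
  have hQX : Q = Polynomial.X * q1 := by
    conv_lhs => rw [← Polynomial.X_mul_divX_add Q]
    rw [hQ0]; simp; rfl
  -- Step 3: p = (∂+2λ) q1(∂) + ∂^N t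
  have h2 : (X 0 : MvPolynomial (Fin 2) ℂ)^(N+1) ∣
      X 0 * ((X 0 + 2 * X 1) * Polynomial.aeval (X 0 : MvPolynomial (Fin 2) ℂ) q1 - p) := by
    obtain ⟨w, hw⟩ := h1
    refine ⟨w, ?_⟩
    rw [hQX, map_mul, Polynomial.aeval_X] at hw
    linear_combination hw
  obtain ⟨t0, ht0⟩ : ∃ t0, (X 0 + 2 * X 1) * Polynomial.aeval (X 0 : MvPolynomial (Fin 2) ℂ) q1
      - p = X 0 ^ N * t0 := by
    obtain ⟨w, hw⟩ := h2
    refine ⟨w, mul_left_cancel₀ (MvPolynomial.X_ne_zero 0) ?_⟩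
    rw [hw]; ring
  have hpt : p = (X 0 + 2 * X 1) * Polynomial.aeval (X 0 : MvPolynomial (Fin 2) ℂ) q1
      + X 0 ^ N * (-t0) := by linear_combination -ht0
  set t : MvPolynomial (Fin 2) ℂ := -t0 with htdef
  -- Step 4: substitute the form of p back into the cocycle equation
  have hev : ∀ g : MvPolynomial (Fin 3) ℂ, aeval ![(X 0 : MvPolynomial (Fin 3) ℂ), g] p
      = (X 0 + 2 * g) * Polynomial.aeval (X 0 : MvPolynomial (Fin 3) ℂ) q1
        + X 0 ^ N * aeval ![(X 0 : MvPolynomial (Fin 3) ℂ), g] t := by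
    intro g
    rw [hpt]
    rw [map_add, map_mul, map_mul, map_pow,
      paeval_map (aeval ![(X 0 : MvPolynomial (Fin 3) ℂ), g])]
    simp only [map_add, map_mul, map_ofNat, aeval_X, Matrix.cons_val_zero, Matrix.cons_val_one,
      Matrix.head_cons]
  rw [hev (X 1 + X 2), hev (X 1), hev (X 2)] at hp
  obtain ⟨w2, hw2⟩ := hp
  have hE : (X 1 - X 2) * aeval ![(X 0 : MvPolynomial (Fin 3) ℂ), X 1 + X 2] t
      - (X 0 + X 1 + 2 * X 2) * aeval ![(X 0 : MvPolynomial (Fin 3) ℂ), X 1] t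
      + (X 0 + 2 * X 1 + X 2) * aeval ![(X 0 : MvPolynomial (Fin 3) ℂ), X 2] t
      = X 0 * w2 := by
    apply mul_left_cancel₀ (pow_ne_zero N (MvPolynomial.X_ne_zero (R := ℂ) (0 : Fin 3)))
    linear_combination hw2
  -- Step 5: set ∂ = 0
  set R : Polynomial ℂ := aeval ![(0 : Polynomial ℂ), Polynomial.X] t with hRdef
  have heq : (X 1 - X 2) * Polynomial.aeval ((X 1 : MvPolynomial (Fin 3) ℂ) + X 2) R
      - (X 1 + 2 * X 2) * Polynomial.aeval (X 1 : MvPolynomial (Fin 3) ℂ) R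
      + (2 * X 1 + X 2) * Polynomial.aeval (X 2 : MvPolynomial (Fin 3) ℂ) R = 0 := by
    have hd := congrArg (aeval ![(0 : MvPolynomial (Fin 3) ℂ), X 1, X 2] :
      MvPolynomial (Fin 3) ℂ → MvPolynomial (Fin 3) ℂ) hE
    rw [map_add, map_sub, map_mul, map_mul, map_mul, map_mul] at hd
    rw [aeval_map2 (aeval ![(0 : MvPolynomial (Fin 3) ℂ), X 1, X 2]) _ _ t,
        aeval_map2 (aeval ![(0 : MvPolynomial (Fin 3) ℂ), X 1, X 2]) _ _ t,
        aeval_map2 (aeval ![(0 : MvPolynomial (Fin 3) ℂ), X 1, X 2]) _ _ t] at hd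
    simp only [map_add, map_sub, map_mul, map_ofNat, aeval_X, Matrix.cons_val_zero,
      Matrix.cons_val_one, Matrix.head_cons, Matrix.cons_val_two, Matrix.tail_cons,
      zero_mul, zero_add] at hd
    rw [extract2 t ((X 1 : MvPolynomial (Fin 3) ℂ) + X 2), extract2 t (X 1 : MvPolynomial (Fin 3) ℂ),
        extract2 t (X 2 : MvPolynomial (Fin 3) ℂ)] at hd
    rw [← hRdef] at hd
    linear_combination hd
  -- Step 6: differentiate in μ, then set μ = 0
  have hD := congrArg (pderiv (2 : Fin 3)) heq
  rw [map_zero] at hD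
  have h22 : (pderiv (2 : Fin 3)) (2 : MvPolynomial (Fin 3) ℂ) = 0 := by
    rw [← map_ofNat (C : ℂ →+* MvPolynomial (Fin 3) ℂ) 2]
    exact pderiv_C
  simp only [h22, map_add, map_sub, Derivation.leibniz, Derivation.map_aeval, pderiv_X_self,
    pderiv_X_of_ne (show (0 : Fin 3) ≠ 2 by decide), pderiv_X_of_ne (show (1 : Fin 3) ≠ 2 by decide),
    smul_eq_mul, mul_one, mul_zero, add_zero, zero_add, zero_sub, sub_zero] at hD
  have hρ := congrArg (aeval ![(0 : Polynomial ℂ), Polynomial.X, 0] :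
      MvPolynomial (Fin 3) ℂ → Polynomial ℂ) hD
  rw [map_zero] at hρ
  simp only [map_add, map_sub, map_mul, map_neg, map_zero, map_one, map_ofNat,
    paeval_map (aeval ![(0 : Polynomial ℂ), Polynomial.X, 0]), aeval_X, Matrix.cons_val_zero,
    Matrix.cons_val_one, Matrix.head_cons, Matrix.cons_val_two, Matrix.tail_cons, add_zero,
    Polynomial.aeval_X_left_apply] at hρ
  have haz1 : Polynomial.aeval (0 : Polynomial ℂ) R = Polynomial.C (R.coeff 0) := by
    rw [Polynomial.aeval_def, Polynomial.eval₂_at_zero, ← Polynomial.algebraMap_eq]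
  have haz2 : Polynomial.aeval (0 : Polynomial ℂ) (Polynomial.derivative R)
      = Polynomial.C ((Polynomial.derivative R).coeff 0) := by
    rw [Polynomial.aeval_def, Polynomial.eval₂_at_zero, ← Polynomial.algebraMap_eq]
  rw [haz1, haz2] at hρ
  have hode : Polynomial.X * Polynomial.derivative R - 3 * R + Polynomial.C (R.coeff 0)
      + 2 * Polynomial.X * Polynomial.C ((Polynomial.derivative R).coeff 0) = 0 := by
    linear_combination hρ
  have hRcl := ode_classify R hode
  -- Step 7: assemble
  obtain ⟨u, hu⟩ := X_dvd_sub_eval0 t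
  rw [extract2 t (X 1 : MvPolynomial (Fin 2) ℂ), ← hRdef] at hu
  refine ⟨q1 + Polynomial.C (R.coeff 1 / 2) * Polynomial.X ^ N, R.coeff 3, ?_⟩
  rw [Ideal.mem_span_singleton]
  refine ⟨u - C (R.coeff 1 / 2), ?_⟩
  have hPA : Polynomial.aeval (X 1 : MvPolynomial (Fin 2) ℂ) R
      = C (R.coeff 1) * X 1 + C (R.coeff 3) * X 1 ^ 3 := by
    conv_lhs => rw [hRcl]
    simp only [map_add, map_mul, map_pow, Polynomial.aeval_X, Polynomial.aeval_C,
      MvPolynomial.algebraMap_eq]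
  have hq2 : Polynomial.aeval (X 0 : MvPolynomial (Fin 2) ℂ)
        (q1 + Polynomial.C (R.coeff 1 / 2) * Polynomial.X ^ N)
      = Polynomial.aeval (X 0 : MvPolynomial (Fin 2) ℂ) q1 + C (R.coeff 1 / 2) * X 0 ^ N := by
    simp only [map_add, map_mul, map_pow, Polynomial.aeval_X, Polynomial.aeval_C,
      MvPolynomial.algebraMap_eq]
  have hCa : (C (R.coeff 1) : MvPolynomial (Fin 2) ℂ) = 2 * C (R.coeff 1 / 2) := by
    rw [← map_ofNat (C : ℂ →+* MvPolynomial (Fin 2) ℂ) 2, ← C_mul]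
    congr 1
    ring
  have hteq : t = C (R.coeff 1) * X 1 + C (R.coeff 3) * X 1 ^ 3 + X 0 * u := by
    rw [← hPA]; linear_combination hu
  rw [hq2, hpt, hteq]
  linear_combination (X 1 : MvPolynomial (Fin 2) ℂ) * (X 0 : MvPolynomial (Fin 2) ℂ) ^ N * hCa
end

section
/- All polynomial solutions $\alpha(x) \in \mathbb{C}[x]$ of the functional equation $(\lambda-\mu)\alpha(\lambda+\mu) - (\lambda+2\mu)\alpha(\lambda) + (2\lambda+\mu)\alpha(\mu) = c_0(\lambda^3 - \mu^3)$ (an identity in $\mathbb{C}[\lambda,\mu]$) exist only when $c_0 = 0$, in which case they are exactly $\alpha(x) = a x + c x^3$ for $a, c \in \mathbb{C}$. -/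
open MvPolynomial

lemma coeff_comp_C_mul_X (α : Polynomial ℂ) (c : ℂ) (n : ℕ) :
    (α.comp (Polynomial.C c * Polynomial.X)).coeff n = c ^ n * α.coeff n := by
  rw [Polynomial.comp, Polynomial.eval₂_eq_sum, Polynomial.sum_def,
    Polynomial.finset_sum_coeff]
  have : ∀ k ∈ α.support,
      (Polynomial.C (α.coeff k) * (Polynomial.C c * Polynomial.X) ^ k).coeff n
        = if n = k then c ^ n * α.coeff n else 0 := by
    intro k _
    rw [mul_pow, ← Polynomial.C_pow, ← mul_assoc, ← Polynomial.C_mul,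
      Polynomial.coeff_C_mul, Polynomial.coeff_X_pow]
    by_cases h : n = k <;> simp [h, mul_comm]
  rw [Finset.sum_congr rfl this, Finset.sum_ite_eq]
  by_cases h : n ∈ α.support
  · simp [h]
  · simp [h, Polynomial.notMem_support_iff.mp h]

lemma three_pow_ne (n : ℕ) (h1 : n ≠ 1) (h3 : n ≠ 3) :
    (3 : ℂ) ^ n - 4 * 2 ^ n + 5 ≠ 0 := by
  have key : (3 : ℕ) ^ n + 5 ≠ 4 * 2 ^ n := by
    match n, h1, h3 with
    | 0, _, _ => decide
    | 1, h, _ => exact absurd rfl h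
    | 2, _, _ => decide
    | 3, _, h => exact absurd rfl h
    | (m+4), _, _ =>
      have : ∀ k, 4 * 2 ^ (k + 4) < 3 ^ (k + 4) := by
        intro k
        induction k with
        | zero => decide
        | succ m ih =>
          calc 4 * 2 ^ (m + 1 + 4) = 2 * (4 * 2 ^ (m + 4)) := by ring
          _ < 2 * 3 ^ (m + 4) := by exact (Nat.mul_lt_mul_left (by norm_num)).mpr ih
          _ ≤ 3 * 3 ^ (m + 4) := Nat.mul_le_mul_right _ (by norm_num)
          _ = 3 ^ (m + 1 + 4) := by ring
      have := this m
      omega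
  intro h
  apply key
  have : ((3 : ℕ) ^ n + 5 : ℂ) = ((4 * 2 ^ n : ℕ) : ℂ) := by
    push_cast
    linear_combination h
  exact_mod_cast this

/-- the polynomial identity
`(λ-μ)α(λ+μ) - (λ+2μ)α(λ) + (2λ+μ)α(μ) = c₀(λ³-μ³)` in `ℂ[λ,μ]` has solutions exactly
when `c₀ = 0`, in which case they are exactly `α(x) = ax + cx³`. -/
theorem virasoro_cocycle_degree_computation (c0 : ℂ) (α : Polynomial ℂ) :
    ((X 0 - X 1) * (Polynomial.aeval ((X 0 + X 1 : MvPolynomial (Fin 2) ℂ)) α)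
        - (X 0 + 2 * X 1) * (Polynomial.aeval (X 0 : MvPolynomial (Fin 2) ℂ) α)
        + (2 * X 0 + X 1) * (Polynomial.aeval (X 1 : MvPolynomial (Fin 2) ℂ) α)
      = C c0 * ((X 0) ^ 3 - (X 1) ^ 3))
    ↔ (c0 = 0 ∧ ∃ a c : ℂ, α = Polynomial.C a * Polynomial.X + Polynomial.C c * Polynomial.X ^ 3) := by
  constructor
  · intro h
    -- Step 1: functional identity over ℂ
    have E : ∀ x y : ℂ, (x - y) * α.eval (x + y) - (x + 2*y) * α.eval x
        + (2*x + y) * α.eval y = c0 * (x^3 - y^3) := by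
      intro x y
      have := congrArg (MvPolynomial.aeval ![x, y] : MvPolynomial (Fin 2) ℂ →ₐ[ℂ] ℂ) h
      simp only [map_add, map_sub, map_mul, ← Polynomial.aeval_algHom_apply] at this
      simpa [← Polynomial.aeval_algHom_apply, Polynomial.coe_aeval_eq_eval] using this
    -- Step 2: c0 = 0
    have hc0 : c0 = 0 := by
      have e1 := E 1 0
      have e2 := E 2 0
      norm_num at e1 e2
      linear_combination (1/3 : ℂ) * e1 - (1/6 : ℂ) * e2
    -- Step 3: the dilation identity
    have hcomp : ∀ y : ℂ, y * (α.eval (3*y) - 4 * α.eval (2*y) + 5 * α.eval y) = 0 := by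
      intro y
      have e := E (2*y) y
      rw [hc0, show (2*y) + y = 3*y by ring] at e
      linear_combination e
    -- Step 4: as polynomials
    have hpoly : Polynomial.X * (α.comp (Polynomial.C 3 * Polynomial.X)
        - Polynomial.C 4 * α.comp (Polynomial.C 2 * Polynomial.X) + Polynomial.C 5 * α) = 0 := by
      apply Polynomial.funext
      intro y
      have := hcomp y
      simp only [Polynomial.eval_mul, Polynomial.eval_sub, Polynomial.eval_add,
        Polynomial.eval_comp, Polynomial.eval_C, Polynomial.eval_X, Polynomial.eval_zero]
      linear_combination this
    have h5 : α.comp (Polynomial.C 3 * Polynomial.X)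
        - Polynomial.C 4 * α.comp (Polynomial.C 2 * Polynomial.X) + Polynomial.C 5 * α = 0 := by
      rcases mul_eq_zero.mp hpoly with hx | h5
      · exact absurd hx Polynomial.X_ne_zero
      · exact h5
    -- Step 5: coefficients vanish outside degrees 1 and 3
    have hcoeff : ∀ n : ℕ, n ≠ 1 → n ≠ 3 → α.coeff n = 0 := by
      intro n h1 h3
      have := congrArg (fun p => Polynomial.coeff p n) h5
      simp only [Polynomial.coeff_add, Polynomial.coeff_sub, Polynomial.coeff_C_mul,
        coeff_comp_C_mul_X, Polynomial.coeff_zero] at this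
      have hfac : ((3:ℂ)^n - 4 * 2^n + 5) * α.coeff n = 0 := by linear_combination this
      rcases mul_eq_zero.mp hfac with hz | hz
      · exact absurd hz (three_pow_ne n h1 h3)
      · exact hz
    refine ⟨hc0, α.coeff 1, α.coeff 3, ?_⟩
    ext n
    simp only [Polynomial.coeff_add, Polynomial.coeff_C_mul, Polynomial.coeff_X,
      Polynomial.coeff_X_pow]
    by_cases h1 : n = 1
    · subst h1; norm_num
    · by_cases h3 : n = 3
      · subst h3; norm_num
      · simp [h1, h3, Ne.symm h1, Ne.symm h3, hcoeff n h1 h3]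
  · rintro ⟨rfl, a, c, rfl⟩
    simp only [map_add, map_mul, map_pow, Polynomial.aeval_X, Polynomial.aeval_C,
      MvPolynomial.algebraMap_eq, map_zero]
    ring
end

section
/- There is no vertex algebra $V$ with $V = \mathbb{C}[\partial]L + \mathbb{C}\mathbf{1}$, where $L$ is a non-torsion element of the $\mathbb{C}[\partial]$-module $V$ (with $\partial = T$) and $[L_\lambda L] = (\partial + 2\lambda)L + c\lambda^3\mathbf{1}$ for some $c \in \mathbb{C}$. -/
open scoped BigOperators

open VertexAlgebra in
/-- there is no vertex algebra `V = ℂ[∂]L + ℂ𝟙` with `L` non-torsion and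
`[L_λ L] = (∂+2λ)L + cλ³𝟙` (coefficientwise: `L_{(0)}L = ∂L`, `L_{(1)}L = 2L`,
`L_{(2)}L = 0`, `L_{(3)}L = 6c·𝟙`, `L_{(n)}L = 0` for `n ≥ 4`). -/
theorem no_virasoro_vertex_algebra {V : Type*} [AddCommGroup V] [Module ℂ V]
    (W : VertexAlgebra V) (Lv : V) (c : ℂ)
    (hspan : ∀ v : V, ∃ (f : Polynomial ℂ) (s : ℂ),
      v = Polynomial.aeval W.D f Lv + s • W.vac)
    (hfree : ∀ f : Polynomial ℂ, Polynomial.aeval W.D f Lv = 0 → f = 0)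
    (h0 : W.P 0 Lv Lv = W.D Lv)
    (h1 : W.P 1 Lv Lv = (2 : ℂ) • Lv)
    (h2 : W.P 2 Lv Lv = 0)
    (h3 : W.P 3 Lv Lv = (6 * c) • W.vac)
    (hn : ∀ n : ℕ, 4 ≤ n → W.P n Lv Lv = 0) :
    False := by
  classical
  set E : ℕ → V := fun k => (W.D ^ k) Lv with hEdef
  have hE0 : E 0 = Lv := by simp [hEdef]
  have hEs : ∀ k : ℕ, E (k + 1) = W.D (E k) := by
    intro k; simp only [hEdef]; rw [pow_succ']; rfl
  -- derivation rule in the second argument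
  have lemA : ∀ (n : ℤ) (b : V),
      W.P n Lv (W.D b) = W.D (W.P n Lv b) + (n : ℂ) • W.P (n - 1) Lv b := by
    intro n b
    have h := W.D_deriv n Lv b
    rw [W.transl_inv n Lv b] at h
    rw [h, neg_smul]; abel
  -- vacuum products
  have vacg : ∀ a : V, W.P (-2) a W.vac = W.D a := by
    intro a
    have ht := W.transl_inv (-1) a W.vac
    rw [W.creation (W.D a)] at ht
    rw [ht]; norm_num
  have vac2 : W.P (-2) Lv W.vac = E 1 := by rw [vacg, hEs 0, hE0]
  have vac3 : W.P (-3) Lv W.vac = (2⁻¹ : ℂ) • E 2 := by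
    have ht := W.transl_inv (-2) Lv W.vac
    rw [vacg (W.D Lv)] at ht
    have hE2 : W.D (W.D Lv) = E 2 := by rw [hEs 1, hEs 0, hE0]
    rw [hE2] at ht
    norm_num at ht
    rw [ht, smul_smul]
    norm_num
  -- products P n Lv (E k)
  have p0 : ∀ k : ℕ, W.P 0 Lv (E k) = E (k + 1) := by
    intro k
    induction k with
    | zero => rw [hE0, h0, hEs 0, hE0]
    | succ k ih =>
      rw [hEs k, lemA 0 (E k), ih, hEs (k+1)]
      norm_num
  have p1 : ∀ k : ℕ, W.P 1 Lv (E k) = ((k : ℂ) + 2) • E k := by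
    intro k
    induction k with
    | zero => rw [hE0, h1]; norm_num
    | succ k ih =>
      rw [hEs k, lemA 1 (E k), ih, map_smul]
      norm_num [p0 k]
      rw [← hEs k]
      -- (cast already normalized)
      module
  have p2_1 : W.P 2 Lv (E 1) = (4 : ℂ) • E 0 := by
    rw [hEs 0, hE0, lemA 2 Lv]
    norm_num [h2, h1, smul_smul, hE0]
  have p2_2 : W.P 2 Lv (E 2) = (10 : ℂ) • E 1 := by
    rw [hEs 1, lemA 2 (E 1), p2_1, map_smul]
    norm_num [p1 1]
    rw [← hEs 0]
    module
  have p2_3 : W.P 2 Lv (E 3) = (18 : ℂ) • E 2 := by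
    rw [hEs 2, lemA 2 (E 2), p2_2, map_smul]
    norm_num [p1 2]
    rw [← hEs 1]
    module
  have p2_4 : W.P 2 Lv (E 4) = (28 : ℂ) • E 3 := by
    rw [hEs 3, lemA 2 (E 3), p2_3, map_smul]
    norm_num [p1 3]
    rw [← hEs 2]
    module
  have p3_1 : W.P 3 Lv (E 1) = 0 := by
    rw [hEs 0, hE0, lemA 3 Lv, h3, map_smul, W.D_vac]
    norm_num [h2]
  have p3_2 : W.P 3 Lv (E 2) = (12 : ℂ) • E 0 := by
    rw [hEs 1, lemA 3 (E 1), p3_1, map_zero]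
    norm_num [p2_1, smul_smul]
  have p3_3 : W.P 3 Lv (E 3) = (42 : ℂ) • E 1 := by
    rw [hEs 2, lemA 3 (E 2), p3_2, map_smul]
    norm_num [p2_2]
    rw [← hEs 0]
    module
  have p3_4 : W.P 3 Lv (E 4) = (96 : ℂ) • E 2 := by
    rw [hEs 3, lemA 3 (E 3), p3_3, map_smul]
    norm_num [p2_3]
    rw [← hEs 1]
    module
  -- polynomial machinery
  have aevalMono : ∀ (k : ℕ) (a : ℂ),
      Polynomial.aeval W.D (Polynomial.monomial k a) Lv = a • E k := by
    intro k a
    rw [Polynomial.aeval_monomial]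
    simp [hEdef, Module.algebraMap_end_apply]
  have hfree' : ∀ (j : ℕ) (a : ℂ), a • E j = 0 → a = 0 := by
    intro j a h
    have hm := hfree (Polynomial.monomial j a) (by rw [aevalMono]; exact h)
    have := congrArg (fun p => Polynomial.coeff p j) hm
    simpa [Polynomial.coeff_monomial] using this
  have eqc : ∀ (j : ℕ) (a b : ℂ), a • E j = b • E j → a = b := by
    intro j a b h
    have : (a - b) • E j = 0 := by rw [sub_smul, h, sub_self]
    exact sub_eq_zero.mp (hfree' j (a - b) this)
  -- eigen operator on polynomials
  have aevalX : ∀ f : Polynomial ℂ,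
      W.P 1 Lv (Polynomial.aeval W.D f Lv)
        = Polynomial.aeval W.D (Polynomial.X * Polynomial.derivative f + Polynomial.C 2 * f) Lv := by
    intro f
    induction f using Polynomial.induction_on' with
    | add p q hp hq =>
      rw [Polynomial.derivative_add]
      rw [show Polynomial.X * (Polynomial.derivative p + Polynomial.derivative q)
            + Polynomial.C 2 * (p + q)
          = (Polynomial.X * Polynomial.derivative p + Polynomial.C 2 * p)
            + (Polynomial.X * Polynomial.derivative q + Polynomial.C 2 * q) by ring]
      simp only [map_add, LinearMap.add_apply, hp, hq]
    | monomial k a =>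
      rw [aevalMono, map_smul, p1 k]
      rw [Polynomial.derivative_monomial, Polynomial.C_mul_monomial]
      cases k with
      | zero =>
        simp only [Nat.cast_zero, mul_zero, Polynomial.monomial_zero_right,
          Polynomial.X_mul_monomial]
        simp only [zero_add]
        rw [aevalMono]
        module
      | succ k =>
        rw [show k + 1 - 1 = k from rfl, Polynomial.X_mul_monomial,
          ← map_add (Polynomial.monomial (k + 1)), aevalMono]
        push_cast
        module
  -- coefficients of X * g' + 2 g
  have cW : ∀ (g : Polynomial ℂ) (k : ℕ),
      (Polynomial.X * Polynomial.derivative g + Polynomial.C 2 * g).coeff k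
        = ((k : ℂ) + 2) * g.coeff k := by
    intro g k
    rw [Polynomial.coeff_add, Polynomial.coeff_C_mul]
    cases k with
    | zero => simp [Polynomial.mul_coeff_zero]
    | succ k =>
      rw [Polynomial.coeff_X_mul, Polynomial.coeff_derivative]
      push_cast
      ring
  -- if aeval (X g' + 2 g) L = 0 then g = 0
  have kil : ∀ g : Polynomial ℂ,
      Polynomial.aeval W.D (Polynomial.X * Polynomial.derivative g + Polynomial.C 2 * g) Lv = 0
        → g = 0 := by
    intro g hg
    have hz := hfree _ hg
    ext k
    have := congrArg (fun p => Polynomial.coeff p k) hz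
    simp only [Polynomial.coeff_zero] at this ⊢
    rw [cW g k] at this
    have hne : ((k : ℂ) + 2) ≠ 0 := by
      have : ((k : ℂ) + 2) = ((k + 2 : ℕ) : ℂ) := by push_cast; ring
      rw [this]
      exact Nat.cast_ne_zero.mpr (by omega)
    exact (mul_eq_zero.mp this).resolve_left hne
  -- the shape lemma
  have shape : ∀ (n : ℕ) (u : V), W.P 1 Lv u = ((n : ℂ) + 3) • u →
      ∃ α : ℂ, u = α • E (n + 1) := by
    intro n u hu
    obtain ⟨f, s, rfl⟩ := hspan u
    set q : Polynomial ℂ := Polynomial.X * Polynomial.derivative f + Polynomial.C 2 * f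
      - Polynomial.C ((n : ℂ) + 3) * f with hq
    have hCf : ∀ (a : ℂ) (p : Polynomial ℂ),
        Polynomial.aeval W.D (Polynomial.C a * p) Lv = a • Polynomial.aeval W.D p Lv := by
      intro a p
      rw [map_mul, Polynomial.aeval_C, Module.End.mul_apply]
      simp [Module.algebraMap_end_apply]
    have hPvac : W.P 1 Lv (s • W.vac) = 0 := by
      rw [map_smul, W.creation_pos Lv 1 (by norm_num), smul_zero]
    have key : Polynomial.aeval W.D q Lv = ((n : ℂ) + 3) • (s • W.vac) := by
      have e1 : W.P 1 Lv (Polynomial.aeval W.D f Lv + s • W.vac)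
          = Polynomial.aeval W.D (Polynomial.X * Polynomial.derivative f + Polynomial.C 2 * f) Lv := by
        rw [map_add, hPvac, add_zero, aevalX f]
      rw [hu] at e1
      rw [hq, map_sub, LinearMap.sub_apply, ← e1, hCf, smul_add]
      abel
    have key2 : Polynomial.aeval W.D
        (Polynomial.X * Polynomial.derivative q + Polynomial.C 2 * q) Lv = 0 := by
      have := aevalX q
      rw [key] at this
      rw [← this, map_smul, hPvac, smul_zero]
    have hq0 : q = 0 := kil q key2
    have hfc : ∀ k : ℕ, k ≠ n + 1 → f.coeff k = 0 := by
      intro k hk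
      have hck := congrArg (fun p => Polynomial.coeff p k) hq0
      simp only [hq, Polynomial.coeff_zero, Polynomial.coeff_sub, Polynomial.coeff_C_mul] at hck
      rw [cW f k] at hck
      have : ((k : ℂ) + 2 - ((n : ℂ) + 3)) * f.coeff k = 0 := by ring_nf; ring_nf at hck; linear_combination hck
      have hne : ((k : ℂ) + 2 - ((n : ℂ) + 3)) ≠ 0 := by
        intro he
        apply hk
        have hkc : (k : ℂ) = ((n + 1 : ℕ) : ℂ) := by push_cast; linear_combination he
        exact Nat.cast_inj.mp hkc
      exact (mul_eq_zero.mp this).resolve_left hne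
    have hsvac : s • W.vac = 0 := by
      have h30 : Polynomial.aeval W.D q Lv = 0 := by rw [hq0]; simp
      rw [h30] at key
      have := congrArg (fun w => (((n : ℂ) + 3)⁻¹) • w) key.symm
      simp only [smul_smul] at this
      have hne3 : ((n : ℂ) + 3) ≠ 0 := by
        have h33 : ((n : ℂ) + 3) = ((n + 3 : ℕ) : ℂ) := by push_cast; ring
        rw [h33]
        exact Nat.cast_ne_zero.mpr (by omega)
      rw [← mul_assoc, inv_mul_cancel₀ hne3, one_mul, smul_zero] at this
      exact this
    refine ⟨f.coeff (n + 1), ?_⟩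
    have hf : f = Polynomial.monomial (n + 1) (f.coeff (n + 1)) := by
      ext k
      by_cases hk : k = n + 1
      · subst hk; simp [Polynomial.coeff_monomial]
      · simp [Polynomial.coeff_monomial, hk, hfc k hk, Ne.symm hk]
    rw [hsvac, add_zero]
    conv_lhs => rw [hf]
    rw [aevalMono]
  -- expand the Borcherds finsum
  have fin4 : ∀ g : ℕ → V, (∀ j, 4 ≤ j → g j = 0) → (∑ᶠ j, g j) = g 0 + g 1 + g 2 + g 3 := by
    intro g hg
    rw [finsum_eq_sum_of_support_subset g (s := Finset.range 4)]
    · simp [Finset.sum_range_succ]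
    · intro x hx
      simp only [Finset.coe_range, Set.mem_Iio]
      by_contra hc
      exact hx (hg x (by omega))
  have Bex : ∀ m k : ℤ,
      W.P m Lv (W.P k Lv Lv) - W.P k Lv (W.P m Lv Lv)
        = ((Ring.choose m 0 : ℤ) : ℂ) • W.P (m + k) (W.P 0 Lv Lv) Lv
        + ((Ring.choose m 1 : ℤ) : ℂ) • W.P (m + k - 1) (W.P 1 Lv Lv) Lv
        + ((Ring.choose m 2 : ℤ) : ℂ) • W.P (m + k - 2) (W.P 2 Lv Lv) Lv
        + ((Ring.choose m 3 : ℤ) : ℂ) • W.P (m + k - 3) (W.P 3 Lv Lv) Lv := by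
    intro m k
    rw [W.borcherds m k Lv Lv Lv]
    rw [fin4 _ ?_]
    · norm_num
    · intro j hj
      rw [hn j hj]
      simp
  have hE1 : W.D Lv = E 1 := by rw [hEs 0, hE0]
  have h0' : W.P 0 Lv Lv = E 1 := by rw [h0, hE1]
  -- the eigen equations and shapes of negative products
  obtain ⟨α1, hu1⟩ : ∃ α : ℂ, W.P (-1) Lv Lv = α • E 2 := by
    apply shape 1
    have b := Bex 1 (-1)
    rw [Ring.choose_zero_right (1:ℤ), Ring.choose_one_right (1:ℤ)] at b
    norm_num at b
    rw [h0, h1, h2, h3, W.transl_inv 0 Lv Lv] at b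
    simp only [map_smul, map_zero, LinearMap.map_smul, LinearMap.smul_apply,
      LinearMap.zero_apply, smul_zero, zero_smul, neg_zero, W.vac_field] at b
    norm_num at b
    push_cast
    linear_combination (norm := module) b
  obtain ⟨α2, hu2⟩ : ∃ α : ℂ, W.P (-2) Lv Lv = α • E 3 := by
    apply shape 2
    have b := Bex 1 (-2)
    rw [Ring.choose_zero_right (1:ℤ), Ring.choose_one_right (1:ℤ), h0, h1, h2, h3] at b
    norm_num at b
    rw [W.transl_inv (-1) Lv Lv] at b
    simp only [map_smul, map_zero, LinearMap.map_smul, LinearMap.smul_apply,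
      LinearMap.zero_apply, smul_zero, zero_smul, neg_zero, W.vac_field] at b
    norm_num at b
    push_cast
    linear_combination (norm := module) b
  obtain ⟨α3, hu3⟩ : ∃ α : ℂ, W.P (-3) Lv Lv = α • E 4 := by
    apply shape 3
    have b := Bex 1 (-3)
    rw [Ring.choose_zero_right (1:ℤ), Ring.choose_one_right (1:ℤ), h0, h1, h2, h3] at b
    norm_num at b
    rw [W.transl_inv (-2) Lv Lv] at b
    simp only [map_smul, map_zero, LinearMap.map_smul, LinearMap.smul_apply,
      LinearMap.zero_apply, smul_zero, zero_smul, neg_zero, W.vac_field] at b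
    norm_num at b
    push_cast
    linear_combination (norm := module) b
  -- the five scalar equations
  have q1 : α1 * 10 = 3 := by
    apply eqc 1
    have b := Bex 2 (-1)
    rw [Ring.choose_zero_right (2:ℤ), Ring.choose_one_right (2:ℤ), h0, h1, h2, h3] at b
    norm_num at b
    rw [W.transl_inv (1) Lv Lv] at b
    simp only [map_smul, map_zero, LinearMap.map_smul, LinearMap.smul_apply,
      LinearMap.zero_apply, smul_zero, zero_smul, neg_zero, W.vac_field, hu1, p2_2] at b
    norm_num [h0', hE1, hu1, hu2, hu3] at b
    linear_combination (norm := module) b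
  have q2 : α2 * 18 = α1 * 4 := by
    apply eqc 2
    have b := Bex 2 (-2)
    rw [Ring.choose_zero_right (2:ℤ), Ring.choose_one_right (2:ℤ), h0, h1, h2, h3] at b
    norm_num at b
    rw [W.transl_inv (0) Lv Lv] at b
    simp only [map_smul, map_zero, LinearMap.map_smul, LinearMap.smul_apply,
      LinearMap.zero_apply, smul_zero, zero_smul, neg_zero, W.vac_field, hu2, hu1, p2_3] at b
    norm_num [h0', hE1, hu1, hu2, hu3] at b
    linear_combination (norm := module) b
  have q3 : α3 * 28 = α2 * 5 := by
    apply eqc 3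
    have b := Bex 2 (-3)
    rw [Ring.choose_zero_right (2:ℤ), Ring.choose_one_right (2:ℤ), h0, h1, h2, h3] at b
    norm_num at b
    rw [W.transl_inv (-1) Lv Lv] at b
    simp only [map_smul, map_zero, LinearMap.map_smul, LinearMap.smul_apply,
      LinearMap.zero_apply, smul_zero, zero_smul, neg_zero, W.vac_field, hu3, hu2, p2_4] at b
    norm_num [h0', hE1, hu1, hu2, hu3] at b
    linear_combination (norm := module) b
  have q4 : α2 * 42 - 6 * c = 5 := by
    apply eqc 1
    have b := Bex 3 (-2)
    rw [Ring.choose_zero_right (3:ℤ), Ring.choose_one_right (3:ℤ), h0, h1, h2, h3] at b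
    norm_num at b
    rw [W.transl_inv (1) Lv Lv] at b
    simp only [map_smul, map_zero, LinearMap.map_smul, LinearMap.smul_apply,
      LinearMap.zero_apply, smul_zero, zero_smul, neg_zero, W.vac_field, hu2, p3_3, vac2] at b
    norm_num [h0', hE1, hu1, hu2, hu3] at b
    linear_combination (norm := module) b
  have q5 : α3 * 96 - 3 * c = α1 * 6 := by
    apply eqc 2
    have b := Bex 3 (-3)
    rw [Ring.choose_zero_right (3:ℤ), Ring.choose_one_right (3:ℤ), h0, h1, h2, h3] at b
    norm_num at b
    rw [W.transl_inv (0) Lv Lv] at b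
    simp only [map_smul, map_zero, LinearMap.map_smul, LinearMap.smul_apply,
      LinearMap.zero_apply, smul_zero, zero_smul, neg_zero, W.vac_field, hu3, hu1, p3_4, vac3] at b
    norm_num [h0', hE1, hu1, hu2, hu3] at b
    linear_combination (norm := module) b
  have final : (31 : ℂ) / 70 = 0 := by
    linear_combination (24/35 : ℂ) * q1 + (3/14 : ℂ) * q2 - (24/7 : ℂ) * q3
      - (1/2 : ℂ) * q4 + q5
  norm_num at final
end
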